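/- Every type 2 local move strictly decreases the total distance statistic d_T = Σ_{v ∈ T} dist(v, root) of a plane tree; consequently the directed graph G_P^+ (vertices the P-valid plane trees, edges the valid type 2 local moves) has no directed cycles. -/

import Mathlib

/-!
Model: a plane tree with n edges is encoded as a non-crossing perfect matching
on the 2n half-edge positions 0,…,2n-1 (0-indexed); a matched pair (i,j) with
i < j is the edge e(i,j) with left half-edge i and right half-edge j.
-/

/-- `M` is a perfect matching on positions `0,…,2n-1`. -/
def IsMatching (n : ℕ) (M : Finset (ℕ × ℕ)) : Prop :=
  (∀ p ∈ M, p.1 < p.2 ∧ p.2 < 2 * n) ∧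
  (∀ k, k < 2 * n → ∃! p, p ∈ M ∧ (p.1 = k ∨ p.2 = k))

/-- No two matched pairs cross. -/
def NonCrossing (M : Finset (ℕ × ℕ)) : Prop :=
  ∀ p ∈ M, ∀ q ∈ M, ¬ (p.1 < q.1 ∧ q.1 < p.2 ∧ p.2 < q.2)

/-- A plane tree on `n` edges: a non-crossing perfect matching on `0,…,2n-1`. -/
def IsPlaneTree (n : ℕ) (M : Finset (ℕ × ℕ)) : Prop :=
  IsMatching n M ∧ NonCrossing M

/-- The plane tree `M` is valid for the word `P` (with complementation `comp`):
every matched pair consists of complementary letters. -/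
def IsValid {A : Type*} (P : ℕ → A) (comp : A → A) (M : Finset (ℕ × ℕ)) : Prop :=
  ∀ p ∈ M, P p.2 = comp (P p.1)

/-- A local move of type 2: two nested *adjacent* edges `e(i,j')`, `e(j,i')`
with `i < j < i' < j'` (adjacency: no edge lies strictly between them, i.e. no
edge `(a,b)` with `i < a < j` and `i' < b < j'`) are replaced by `e(i,j)` and
`e(i',j')`. -/
def Type2Move (M M' : Finset (ℕ × ℕ)) : Prop :=
  ∃ i j i' j', i < j ∧ j < i' ∧ i' < j' ∧
    (i, j') ∈ M ∧ (j, i') ∈ M ∧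
    (¬ ∃ q ∈ M, i < q.1 ∧ q.1 < j ∧ i' < q.2 ∧ q.2 < j') ∧
    M' = insert (i, j) (insert (i', j') ((M.erase (i, j')).erase (j, i')))

/-- A valid local move of type 2: a type 2 move whose initial and resulting
plane trees are both `P`-valid. -/
def ValidType2Move {A : Type*} (P : ℕ → A) (comp : A → A)
    (M M' : Finset (ℕ × ℕ)) : Prop :=
  Type2Move M M' ∧ IsValid P comp M ∧ IsValid P comp M'

/-- The total-distance statistic `d_T = ∑_{v ∈ T} dist(v, root)`: in the
matching model each edge `p` contributes `1 +` (the number of edges strictly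
containing `p`), since the lower endpoint of an edge at nesting depth `d` is at
distance `d + 1` from the root. -/
def totalDepth (M : Finset (ℕ × ℕ)) : ℕ :=
  M.card + ∑ p ∈ M, (M.filter (fun q => q.1 < p.1 ∧ p.2 < q.2)).card

set_option maxHeartbeats 1000000 in
lemma type2_decrease (n : ℕ) (M M' : Finset (ℕ × ℕ))
    (hPT : IsPlaneTree n M) (hmv : Type2Move M M') :
    totalDepth M' < totalDepth M := by
  obtain ⟨⟨hbound, huniq⟩, hnc⟩ := hPT
  obtain ⟨i, j, i', j', h1, h2, h3, hA, hB, hadj, hM'def⟩ := hmv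
  have key : ∀ p ∈ M, ∀ q ∈ M, ∀ k : ℕ, (p.1 = k ∨ p.2 = k) → (q.1 = k ∨ q.2 = k) → p = q := by
    intro p hp q hq k hpk hqk
    have hk : k < 2 * n := by
      rcases hpk with h | h
      · exact h ▸ lt_trans (hbound p hp).1 (hbound p hp).2
      · exact h ▸ (hbound p hp).2
    obtain ⟨r, -, hu⟩ := huniq k hk
    exact (hu p ⟨hp, hpk⟩).trans (hu q ⟨hq, hqk⟩).symm
  set M₀ := (M.erase (i, j')).erase (j, i') with hM₀def
  have hABne : ((i, j') : ℕ × ℕ) ≠ (j, i') := by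
    intro h; rw [Prod.mk.injEq] at h; omega
  have hM0mem : ∀ q : ℕ × ℕ, q ∈ M₀ ↔ q ∈ M ∧ q ≠ (i, j') ∧ q ≠ (j, i') := by
    intro q; simp only [hM₀def, Finset.mem_erase]; tauto
  have hBM0 : ((j, i') : ℕ × ℕ) ∉ M₀ := by
    intro h; exact ((hM0mem _).mp h).2.2 rfl
  have hAM0 : ((i, j') : ℕ × ℕ) ∉ M₀ := by
    intro h; exact ((hM0mem _).mp h).2.1 rfl
  have hAnotin : ((i, j') : ℕ × ℕ) ∉ insert (j, i') M₀ := by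
    intro h
    rcases Finset.mem_insert.mp h with h | h
    · exact hABne h
    · exact hAM0 h
  have hMeq : M = insert (i, j') (insert (j, i') M₀) := by
    rw [hM₀def, Finset.insert_erase (Finset.mem_erase.mpr ⟨hABne.symm, hB⟩),
      Finset.insert_erase hA]
  have hIJ : ((i, j) : ℕ × ℕ) ∉ M := by
    intro h
    have := key _ h _ hA i (Or.inl rfl) (Or.inl rfl)
    rw [Prod.mk.injEq] at this; omega
  have hI'J' : ((i', j') : ℕ × ℕ) ∉ M := by
    intro h
    have := key _ h _ hB i' (Or.inl rfl) (Or.inr rfl)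
    rw [Prod.mk.injEq] at this; omega
  have hI'J'M0 : ((i', j') : ℕ × ℕ) ∉ M₀ := fun h => hI'J' ((hM0mem _).mp h).1
  have hIJM0 : ((i, j) : ℕ × ℕ) ∉ insert (i', j') M₀ := by
    intro h
    rcases Finset.mem_insert.mp h with h | h
    · rw [Prod.mk.injEq] at h; omega
    · exact hIJ ((hM0mem _).mp h).1
  have hcard : M'.card = M.card := by
    rw [hM'def, Finset.card_insert_of_notMem hIJM0,
      Finset.card_insert_of_notMem hI'J'M0]
    conv_rhs => rw [hMeq]
    rw [Finset.card_insert_of_notMem hAnotin, Finset.card_insert_of_notMem hBM0]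
  -- membership in M' implies membership in M₀ unless it is a new edge
  have hM'mem : ∀ q : ℕ × ℕ, q ∈ M' → q = (i, j) ∨ q = (i', j') ∨ q ∈ M₀ := by
    intro q hq
    rw [hM'def, Finset.mem_insert, Finset.mem_insert] at hq
    tauto
  -- (1) depth of new edge (i,j) is at most old depth of (i,j')
  have hsub1 : M'.filter (fun r => r.1 < i ∧ j < r.2)
      ⊆ M.filter (fun r => r.1 < i ∧ j' < r.2) := by
    intro q hq
    rw [Finset.mem_filter] at hq
    obtain ⟨hqM', hq1, hq2⟩ := hq
    have hqM : q ∈ M₀ := by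
      rcases hM'mem q hqM' with rfl | rfl | h
      · exact absurd hq1 (by simp)
      · exfalso; have : i' < i := hq1; omega
      · exact h
    obtain ⟨hqM, hne1, hne2⟩ := (hM0mem q).mp hqM
    have h2n : q.2 ≠ j' := by
      intro h
      exact hne1 (key q hqM _ hA j' (Or.inr h) (Or.inr rfl))
    have hcross : ¬ (q.1 < i ∧ i < q.2 ∧ q.2 < j') := hnc q hqM (i, j') hA
    exact Finset.mem_filter.mpr ⟨hqM, hq1, by omega⟩
  -- (2) depth of new edge (i',j') is at most old depth of (i,j')
  have hsub2 : M'.filter (fun r => r.1 < i' ∧ j' < r.2)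
      ⊆ M.filter (fun r => r.1 < i ∧ j' < r.2) := by
    intro q hq
    rw [Finset.mem_filter] at hq
    obtain ⟨hqM', hq1, hq2⟩ := hq
    have hqM : q ∈ M₀ := by
      rcases hM'mem q hqM' with rfl | rfl | h
      · exfalso; have : j' < j := hq2; omega
      · exfalso; have : j' < j' := hq2; omega
      · exact h
    obtain ⟨hqM, hne1, hne2⟩ := (hM0mem q).mp hqM
    have h1n : q.1 ≠ i := by
      intro h
      exact hne1 (key q hqM _ hA i (Or.inl h) (Or.inl rfl))
    have hcross : ¬ (i < q.1 ∧ q.1 < j' ∧ j' < q.2) := hnc (i, j') hA q hqM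
    exact Finset.mem_filter.mpr ⟨hqM, by omega, hq2⟩
  -- (3) old depth of (j,i') is at least old depth of (i,j') plus one
  have hd3 : (M.filter (fun r => r.1 < i ∧ j' < r.2)).card + 1
      ≤ (M.filter (fun r => r.1 < j ∧ i' < r.2)).card := by
    have hnotin : ((i, j') : ℕ × ℕ) ∉ M.filter (fun r => r.1 < i ∧ j' < r.2) := by
      intro h
      have h' : i < i := (Finset.mem_filter.mp h).2.1
      omega
    have hsub : insert (i, j') (M.filter (fun r => r.1 < i ∧ j' < r.2))
        ⊆ M.filter (fun r => r.1 < j ∧ i' < r.2) := by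
      intro q hq
      rcases Finset.mem_insert.mp hq with rfl | hq
      · exact Finset.mem_filter.mpr ⟨hA, h1, h3⟩
      · obtain ⟨hqM, hq1, hq2⟩ := Finset.mem_filter.mp hq
        exact Finset.mem_filter.mpr ⟨hqM, by omega, by omega⟩
    calc (M.filter (fun r => r.1 < i ∧ j' < r.2)).card + 1
        = (insert (i, j') (M.filter (fun r => r.1 < i ∧ j' < r.2))).card := by
          rw [Finset.card_insert_of_notMem hnotin]
      _ ≤ _ := Finset.card_le_card hsub
  -- (4) every other edge's depth does not increase
  have hsum : ∀ q ∈ M₀,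
      (M'.filter (fun r => r.1 < q.1 ∧ q.2 < r.2)).card
        ≤ (M.filter (fun r => r.1 < q.1 ∧ q.2 < r.2)).card := by
    intro q hqM₀
    obtain ⟨hqM, hqne1, hqne2⟩ := (hM0mem q).mp hqM₀
    have hq12 : q.1 < q.2 := (hbound q hqM).1
    apply Finset.card_le_card_of_injOn
      (fun r => if r = (i, j) ∨ r = (i', j') then (i, j') else r)
    · intro r hr
      simp only [Finset.mem_coe] at hr ⊢
      rw [Finset.mem_filter] at hr
      obtain ⟨hrM', hr1, hr2⟩ := hr
      by_cases hcase : r = (i, j) ∨ r = (i', j')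
      · rw [if_pos hcase]
        apply Finset.mem_filter.mpr
        refine ⟨hA, ?_, ?_⟩
        · rcases hcase with rfl | rfl
          · exact hr1
          · have : i' < q.1 := hr1
            show i < q.1
            omega
        · rcases hcase with rfl | rfl
          · have : q.2 < j := hr2
            show q.2 < j'
            omega
          · exact hr2
      · rw [if_neg hcase]
        push_neg at hcase
        have hrM0 : r ∈ M₀ := by
          rcases hM'mem r hrM' with h | h | h
          · exact absurd h hcase.1
          · exact absurd h hcase.2
          · exact h
        exact Finset.mem_filter.mpr ⟨((hM0mem r).mp hrM0).1, hr1, hr2⟩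
    · intro r1 hr1m r2 hr2m heq0
      have heq : (if r1 = (i, j) ∨ r1 = (i', j') then ((i, j') : ℕ × ℕ) else r1)
          = (if r2 = (i, j) ∨ r2 = (i', j') then ((i, j') : ℕ × ℕ) else r2) := heq0
      rw [Finset.mem_coe, Finset.mem_filter] at hr1m hr2m
      by_cases c1 : r1 = (i, j) ∨ r1 = (i', j') <;>
        by_cases c2 : r2 = (i, j) ∨ r2 = (i', j')
      · rcases c1 with rfl | rfl <;> rcases c2 with rfl | rfl
        · rfl
        · exfalso
          have ha : q.2 < j := hr1m.2.2
          have hb : i' < q.1 := hr2m.2.1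
          omega
        · exfalso
          have ha : q.2 < j := hr2m.2.2
          have hb : i' < q.1 := hr1m.2.1
          omega
        · rfl
      · exfalso
        rw [if_pos c1, if_neg c2] at heq
        have hr2M0 : r2 ∈ M₀ := by
          push_neg at c2
          rcases hM'mem r2 hr2m.1 with h | h | h
          · exact absurd h c2.1
          · exact absurd h c2.2
          · exact h
        rw [← heq] at hr2M0
        exact hAM0 hr2M0
      · exfalso
        rw [if_neg c1, if_pos c2] at heq
        have hr1M0 : r1 ∈ M₀ := by
          push_neg at c1
          rcases hM'mem r1 hr1m.1 with h | h | h
          · exact absurd h c1.1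
          · exact absurd h c1.2
          · exact h
        rw [heq] at hr1M0
        exact hAM0 hr1M0
      · rw [if_neg c1, if_neg c2] at heq
        exact heq
  -- sum decompositions
  have sumM : ∀ f : ℕ × ℕ → ℕ,
      ∑ p ∈ M, f p = f (i, j') + (f (j, i') + ∑ p ∈ M₀, f p) := by
    intro f
    conv_lhs => rw [hMeq]
    rw [Finset.sum_insert hAnotin, Finset.sum_insert hBM0]
  have sumM' : ∀ f : ℕ × ℕ → ℕ,
      ∑ p ∈ M', f p = f (i, j) + (f (i', j') + ∑ p ∈ M₀, f p) := by
    intro f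
    conv_lhs => rw [hM'def]
    rw [Finset.sum_insert hIJM0, Finset.sum_insert hI'J'M0]
  have S : ∑ p ∈ M, (M.filter (fun r => r.1 < p.1 ∧ p.2 < r.2)).card
      = (M.filter (fun r => r.1 < i ∧ j' < r.2)).card
        + ((M.filter (fun r => r.1 < j ∧ i' < r.2)).card
          + ∑ p ∈ M₀, (M.filter (fun r => r.1 < p.1 ∧ p.2 < r.2)).card) :=
    sumM (fun p => (M.filter (fun r => r.1 < p.1 ∧ p.2 < r.2)).card)
  have S' : ∑ p ∈ M', (M'.filter (fun r => r.1 < p.1 ∧ p.2 < r.2)).card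
      = (M'.filter (fun r => r.1 < i ∧ j < r.2)).card
        + ((M'.filter (fun r => r.1 < i' ∧ j' < r.2)).card
          + ∑ p ∈ M₀, (M'.filter (fun r => r.1 < p.1 ∧ p.2 < r.2)).card) :=
    sumM' (fun p => (M'.filter (fun r => r.1 < p.1 ∧ p.2 < r.2)).card)
  have d1 := Finset.card_le_card hsub1
  have d2 := Finset.card_le_card hsub2
  have d4 : ∑ p ∈ M₀, (M'.filter (fun r => r.1 < p.1 ∧ p.2 < r.2)).card
      ≤ ∑ p ∈ M₀, (M.filter (fun r => r.1 < p.1 ∧ p.2 < r.2)).card :=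
    Finset.sum_le_sum hsum
  unfold totalDepth
  rw [hcard, S, S']
  omega

/-- Every type 2 local move strictly decreases the total distance
statistic `d_T`; consequently the directed graph `G_P⁺` of valid type 2 moves
on `P`-valid plane trees has no directed cycles. -/
theorem type2_decreases_totalDepth_and_acyclic {A : Type*}
    (comp : A → A) (hinv : Function.Involutive comp) (hff : ∀ a, comp a ≠ a)
    (n : ℕ) (P : ℕ → A) :
    (∀ M M' : Finset (ℕ × ℕ), IsPlaneTree n M → Type2Move M M' →
      totalDepth M' < totalDepth M) ∧
    (¬ ∃ M : Finset (ℕ × ℕ), IsPlaneTree n M ∧ IsValid P comp M ∧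
      Relation.TransGen
        (fun X Y => IsPlaneTree n X ∧ IsPlaneTree n Y ∧ ValidType2Move P comp X Y)
        M M) := by
  refine ⟨fun M M' hPT hmv => type2_decrease n M M' hPT hmv, ?_⟩
  rintro ⟨M, hM, hV, hcyc⟩
  have keydec : ∀ X Y : Finset (ℕ × ℕ),
      Relation.TransGen
        (fun X Y => IsPlaneTree n X ∧ IsPlaneTree n Y ∧ ValidType2Move P comp X Y) X Y →
      totalDepth Y < totalDepth X := by
    intro X Y h
    induction h with
    | single hs => exact type2_decrease n _ _ hs.1 hs.2.2.1
    | tail hab hbc ih => exact lt_trans (type2_decrease n _ _ hbc.1 hbc.2.2.1) ih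
  exact absurd (keydec M M hcyc) (lt_irrefl _)
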